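/- arXiv:2409.17358 — 4 statements merged into one kernel-verified Lean document; each statement's English description precedes it below -/
import Mathlib

section
/- Let i: M ↪ N be a Γ-equivariant immersion of L-analytic manifolds with Galois actions (Γ = Gal(L/F) finite). Then for every Γ-fixed point p ∈ M there exists a Γ-invariant submanifold S ⊆ N of complementary dimension with M ∩ S = {p} and T_p N = T_p M ⊕ T_p S. -/
open Set Submodule Module Metric

theorem exists_isCompl_span_subset {K V : Type*} [Field K] [AddCommGroup V] [Module K V]
    (R : Submodule K V) (t : Set V) (ht : Submodule.span K t = ⊤) :
    ∃ c ⊆ t, IsCompl R (Submodule.span K c) := by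
  obtain ⟨b₀, hb₀R, hspan₀, hli₀⟩ := exists_linearIndependent K (R : Set V)
  rw [Submodule.span_eq] at hspan₀
  replace hli₀ : LinearIndepOn K id b₀ := hli₀
  set b := hli₀.extend (Set.subset_union_left (s := b₀) (t := t)) with hbdef
  have hb_sub : b ⊆ b₀ ∪ t := hli₀.extend_subset _
  have hb₀b : b₀ ⊆ b := hli₀.subset_extend _
  have hli : LinearIndependent K ((↑) : b → V) := hli₀.linearIndepOn_extend _
  have hspanb : Submodule.span K b = ⊤ := by
    rw [hli₀.span_extend_eq_span, Submodule.span_union, hspan₀, ht, sup_top_eq]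
  refine ⟨b \ b₀, ?_, ?_, ?_⟩
  · intro x hx
    rcases hb_sub hx.1 with h | h
    · exact absurd h hx.2
    · exact h
  · have hdisj : Disjoint {x : b | (x : V) ∈ b₀} {x : b | (x : V) ∈ b \ b₀} := by
      rw [Set.disjoint_iff]
      rintro x ⟨h1, h2⟩
      exact h2.2 h1
    have h3 := hli.disjoint_span_image hdisj
    have h1 : ((↑) : b → V) '' {x : b | (x : V) ∈ b₀} = b₀ := by
      ext y
      constructor
      · rintro ⟨x, hx, rfl⟩; exact hx
      · intro hy; exact ⟨⟨y, hb₀b hy⟩, hy, rfl⟩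
    have h2 : ((↑) : b → V) '' {x : b | (x : V) ∈ b \ b₀} = b \ b₀ := by
      ext y
      constructor
      · rintro ⟨x, hx, rfl⟩; exact hx
      · intro hy; exact ⟨⟨y, hy.1⟩, hy, rfl⟩
    rwa [h1, h2, hspan₀] at h3
  · rw [codisjoint_iff, ← hspan₀, ← Submodule.span_union, Set.union_diff_cancel hb₀b, hspanb]

/-- equivariant slice lemma, in local coordinates.  Let `Γ = Gal(L/F)` be
finite, acting on `L` by isometric ring automorphisms and hence diagonally on `L^m`, `L^n`.
Let `i : M ↪ N` be a `Γ`-equivariant immersion of `L`-analytic manifolds, given locally by a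
`Γ`-equivariant analytic map `f` on an open set `D ⊆ L^m` with everywhere injective
differential, and let `p ∈ D` be a `Γ`-fixed point.  Then there exists a `Γ`-invariant
(affine, hence analytic) submanifold `S = f(p) + W ⊆ L^n` of complementary dimension with
`f(D) ∩ S = {f(p)}` locally around `f(p)`, and `T_{f p} L^n = im(d_p f) ⊕ W`. -/
theorem stmt5
    (L : Type*) [NontriviallyNormedField L]
    (Γ : Type*) [Group Γ] [Finite Γ] [MulSemiringAction Γ L]
    (hΓiso : ∀ (γ : Γ) (x : L), ‖γ • x‖ = ‖x‖)
    (m n : ℕ) (f : (Fin m → L) → (Fin n → L)) (D : Set (Fin m → L)) (hD : IsOpen D)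
    (hf : AnalyticOnNhd L f D)
    (hequiv : ∀ (γ : Γ), ∀ x ∈ D, γ • x ∈ D ∧ f (γ • x) = γ • f x)
    (himm : ∀ x ∈ D, Function.Injective (fderiv L f x))
    (p : Fin m → L) (hp : p ∈ D) (hpfix : ∀ γ : Γ, γ • p = p) :
    ∃ (W : Submodule L (Fin n → L)) (U : Set (Fin n → L)) (D' : Set (Fin m → L)),
      IsOpen U ∧ f p ∈ U ∧ IsOpen D' ∧ p ∈ D' ∧ D' ⊆ D ∧
      Module.finrank L W = n - m ∧
      (∀ γ : Γ, (fun v : Fin n → L => γ • v) '' (W : Set (Fin n → L)) = (W : Set (Fin n → L))) ∧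
      (f '' D') ∩ (((fun w => f p + w) '' (W : Set (Fin n → L))) ∩ U) = {f p} ∧
      IsCompl (LinearMap.range ((fderiv L f p : (Fin m → L) →L[L] (Fin n → L)) : (Fin m → L) →ₗ[L] (Fin n → L))) W := by
  classical
  set Df : (Fin m → L) →L[L] (Fin n → L) := fderiv L f p with hDf
  set R : Submodule L (Fin n → L) := LinearMap.range (Df : (Fin m → L) →ₗ[L] (Fin n → L)) with hR
  have hspan_std : Submodule.span L (Set.range (⇑(Pi.basisFun L (Fin n)))) = ⊤ :=
    (Pi.basisFun L (Fin n)).span_eq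
  obtain ⟨c, hc_sub, hcompl⟩ := exists_isCompl_span_subset R _ hspan_std
  set W : Submodule L (Fin n → L) := Submodule.span L c with hW
  have hfix_c : ∀ γ : Γ, ∀ x ∈ c, γ • x = x := by
    intro γ x hx
    obtain ⟨i, rfl⟩ := hc_sub hx
    funext j
    rw [Pi.smul_apply, Pi.basisFun_apply]
    by_cases h : j = i
    · subst h; simpa using smul_one γ
    · simpa [Pi.single_eq_of_ne h] using smul_zero γ
  have hWstable : ∀ γ : Γ, ∀ w ∈ W, γ • w ∈ W := by
    intro γ w hw
    induction hw using Submodule.span_induction with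
    | mem x hx => rw [hfix_c γ x hx]; exact Submodule.subset_span hx
    | zero => rw [smul_zero]; exact W.zero_mem
    | add x y _ _ hx hy => rw [smul_add]; exact W.add_mem hx hy
    | smul a x _ hx =>
        have h : γ • (a • x) = (γ • a) • (γ • x) := by
          funext j
          rw [Pi.smul_apply, Pi.smul_apply (γ • a), Pi.smul_apply, Pi.smul_apply,
            smul_eq_mul, smul_eq_mul]
          exact smul_mul' γ a (x j)
        rw [h]; exact W.smul_mem _ hx
  have hWimage : ∀ γ : Γ, (fun v : Fin n → L => γ • v) '' (W : Set (Fin n → L))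
      = (W : Set (Fin n → L)) := by
    intro γ
    apply Set.Subset.antisymm
    · rintro _ ⟨w, hw, rfl⟩; exact hWstable γ w hw
    · intro w hw
      exact ⟨γ⁻¹ • w, hWstable γ⁻¹ w hw, smul_inv_smul γ w⟩
  have hinj : Function.Injective Df := himm p hp
  have hRm : finrank L R = m := by
    have h := LinearMap.finrank_range_of_inj (f := (Df : (Fin m → L) →ₗ[L] (Fin n → L))) hinj
    rw [hR]
    simpa [Module.finrank_fin_fun] using h
  have hsum : finrank L R + finrank L W = n := by
    rw [Submodule.finrank_add_eq_of_isCompl hcompl, Module.finrank_fin_fun]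
  have hWrank : finrank L W = n - m := by omega
  -- the gluing map g(x, w) = f x + w and its derivative
  set T : ((Fin m → L) × ↥W) →L[L] (Fin n → L) := Df.coprod W.subtypeL with hT
  set g : (Fin m → L) × ↥W → (Fin n → L) := fun q => f q.1 + (q.2 : Fin n → L) with hg
  have hTapp : ∀ q : (Fin m → L) × ↥W, T q = Df q.1 + (q.2 : Fin n → L) := fun q => rfl
  have hTinj : Function.Injective T := by
    intro a b hab
    have h0 : T (a - b) = 0 := by rw [map_sub, hab, sub_self]
    have h1 : Df (a.1 - b.1) + ((a.2 - b.2 : ↥W) : Fin n → L) = 0 := by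
      simpa [hTapp] using h0
    have hmem : Df (a.1 - b.1) ∈ R ⊓ W := by
      refine ⟨⟨a.1 - b.1, rfl⟩, ?_⟩
      have h2 : Df (a.1 - b.1) = -((a.2 - b.2 : ↥W) : Fin n → L) := by
        rw [eq_neg_iff_add_eq_zero]; exact h1
      rw [h2]
      exact W.neg_mem (a.2 - b.2).2
    rw [hcompl.inf_eq_bot, Submodule.mem_bot] at hmem
    have he1 : a.1 = b.1 := by
      have h4 : Df (a.1 - b.1) = Df 0 := by rw [hmem, map_zero]
      have h5 := hinj h4
      rwa [sub_eq_zero] at h5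
    have he2 : a.2 = b.2 := by
      have h3 : ((a.2 - b.2 : ↥W) : Fin n → L) = 0 := by
        rw [hmem] at h1; simpa using h1
      have : a.2 - b.2 = 0 := Subtype.ext h3
      rwa [sub_eq_zero] at this
    exact Prod.ext he1 he2
  have hTsurj : Function.Surjective T := by
    intro y
    have hy : y ∈ R ⊔ W := by rw [hcompl.sup_eq_top]; trivial
    obtain ⟨r, hr, w, hw, rfl⟩ := Submodule.mem_sup.1 hy
    obtain ⟨x, rfl⟩ := hr
    exact ⟨(x, ⟨w, hw⟩), rfl⟩
  -- continuous linear equivalence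
  let eLin : ((Fin m → L) × ↥W) ≃ₗ[L] (Fin n → L) :=
    LinearEquiv.ofBijective (T : ((Fin m → L) × ↥W) →ₗ[L] (Fin n → L)) ⟨hTinj, hTsurj⟩
  let e : ((Fin m → L) × ↥W) ≃L[L] (Fin n → L) :=
    { eLin with
      continuous_toFun := T.continuous
      continuous_invFun := by
        have := LinearMap.continuous_on_pi (eLin.symm.toLinearMap : (Fin n → L) →ₗ[L] ((Fin m → L) × ↥W)); exact this }
  have heT : (e : ((Fin m → L) × ↥W) →L[L] (Fin n → L)) = T := by
    ext x : 1 <;> rfl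
  -- strict differentiability of g at (p, 0)
  have hst_f : HasStrictFDerivAt f Df p := (hf p hp).hasStrictFDerivAt
  have h1 : HasStrictFDerivAt (fun q : (Fin m → L) × ↥W => f q.1)
      (Df.comp (ContinuousLinearMap.fst L (Fin m → L) ↥W)) (p, (0 : ↥W)) :=
    hst_f.comp (p, (0 : ↥W)) hasStrictFDerivAt_fst
  have h2 : HasStrictFDerivAt (fun q : (Fin m → L) × ↥W => (q.2 : Fin n → L))
      (W.subtypeL.comp (ContinuousLinearMap.snd L (Fin m → L) ↥W)) (p, (0 : ↥W)) :=
    (W.subtypeL.comp (ContinuousLinearMap.snd L (Fin m → L) ↥W)).hasStrictFDerivAt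
  have hgstrict : HasStrictFDerivAt g
      ((e : ((Fin m → L) × ↥W) →L[L] (Fin n → L))) (p, (0 : ↥W)) := by
    rw [heT]
    have hsum' := h1.add h2
    have : T = Df.comp (ContinuousLinearMap.fst L (Fin m → L) ↥W)
        + W.subtypeL.comp (ContinuousLinearMap.snd L (Fin m → L) ↥W) := by
      ext x : 1 <;> rfl
    rw [this]
    exact hsum'
  obtain ⟨s, hps, hs_open, happrox⟩ := hgstrict.approximates_deriv_on_open_nhds
  have hinjOn : Set.InjOn g s :=
    happrox.injOn (e.subsingleton_or_nnnorm_symm_pos.imp id fun h =>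
      NNReal.half_lt_self (ne_of_gt (inv_pos.2 h)))
  -- extract a product ball inside s
  obtain ⟨ε, hε, hball⟩ := Metric.isOpen_iff.1 hs_open _ hps
  refine ⟨W, Metric.ball (f p) ε, D ∩ Metric.ball p ε, Metric.isOpen_ball,
    Metric.mem_ball_self hε, hD.inter Metric.isOpen_ball,
    ⟨hp, Metric.mem_ball_self hε⟩, Set.inter_subset_left, hWrank, hWimage, ?_, hcompl⟩
  -- the intersection property
  apply Set.eq_singleton_iff_unique_mem.2
  constructor
  · exact ⟨⟨p, ⟨hp, Metric.mem_ball_self hε⟩, rfl⟩,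
      ⟨0, W.zero_mem, by simp⟩, Metric.mem_ball_self hε⟩
  · rintro y ⟨⟨x, ⟨hxD, hxball⟩, rfl⟩, ⟨w₀, hw₀, hweq⟩, hyU⟩
    set w : ↥W := ⟨w₀, hw₀⟩ with hwdef
    have hx_mem : ((x, (0 : ↥W)) : (Fin m → L) × ↥W) ∈ s := by
      apply hball
      rw [Metric.mem_ball, Prod.dist_eq]
      simp only [dist_self]
      exact max_lt (by rwa [Metric.mem_ball] at hxball) hε
    have hw_mem : ((p, w) : (Fin m → L) × ↥W) ∈ s := by
      apply hball
      rw [Metric.mem_ball, Prod.dist_eq]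
      have hwnorm : dist w 0 < ε := by
        rw [dist_zero_right]
        have : ‖w‖ = ‖w₀‖ := rfl
        rw [this]
        have hw₀eq : w₀ = f x - f p := eq_sub_iff_add_eq.2 (by rw [add_comm]; exact hweq)
        rw [hw₀eq, ← dist_eq_norm]
        rwa [Metric.mem_ball] at hyU
      exact max_lt (by simp [hε]) hwnorm
    have hgeq : g (x, (0 : ↥W)) = g (p, w) := by
      show f x + (((0 : ↥W) : Fin n → L)) = f p + ((w : Fin n → L))
      rw [ZeroMemClass.coe_zero, add_zero]
      exact hweq.symm
    have hpair := hinjOn hx_mem hw_mem hgeq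
    have hweq0 : w = 0 := (Prod.ext_iff.1 hpair.symm).2
    have hw₀0 : w₀ = 0 := congrArg Subtype.val hweq0
    rw [← hweq, hw₀0]
    exact add_zero (f p)
end

section
/- Let r ≥ 1 and let (V, |·|) be a finite-dimensional normed vector space over a non-archimedean local field F whose norm takes values in the group |ϖ|^{(1/r)ℤ} ⊂ ℝ_{>0} (ϖ a uniformizer). Then there exists a basis (e_i) of V such that |Σ λ_i e_i| = max_i |λ_i||e_i| for all scalars λ_i (the norm is 'diagonalizable'), and the unit ball of the base-changed norm on V ⊗_F F(ϖ^{1/r}) is the free O_{F(ϖ^{1/r})}-lattice spanned by the elements e_i ⊗ ϖ^{w_i/r}, where w_i ∈ ℤ satisfies |e_i| = |ϖ|^{-w_i/r}. -/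
private lemma sup_split {n : ℕ} (f : Fin (n + 1) → ℝ) (hf : ∀ i, 0 ≤ f i) :
    (⨆ i, f i) = max (⨆ i : Fin n, f i.castSucc) (f (Fin.last n)) := by
  have bdd : BddAbove (Set.range f) := (Set.finite_range f).bddAbove
  have bdd' : BddAbove (Set.range fun i : Fin n => f i.castSucc) :=
    (Set.finite_range _).bddAbove
  apply le_antisymm
  · refine Real.iSup_le (fun i => ?_) (le_max_of_le_right (hf _))
    induction i using Fin.lastCases with
    | last => exact le_max_of_le_right le_rfl
    | cast i => exact le_max_of_le_left (le_ciSup bdd' i)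
  · refine max_le (Real.iSup_le (fun i => le_ciSup bdd i.castSucc)
      (le_trans (hf _) (le_ciSup bdd (Fin.last n)))) (le_ciSup bdd (Fin.last n))

private theorem gi_aux {F : Type*} [NontriviallyNormedField F] [CompleteSpace F]
    {c : ℝ} (hc0 : 0 < c) (hc1 : c < 1) :
    ∀ (n : ℕ) (V : Type*) [AddCommGroup V] [Module F V] [FiniteDimensional F V],
      Module.finrank F V = n →
      ∀ ν : V → ℝ, (∀ v, ν v = 0 ↔ v = 0) → (∀ v, 0 ≤ ν v) →
        (∀ (a : F) (v : V), ν (a • v) = ‖a‖ * ν v) →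
        (∀ v w, ν (v + w) ≤ max (ν v) (ν w)) →
        (∀ v, v ≠ 0 → ∃ k : ℤ, ν v = c ^ k) →
        ∃ e : Module.Basis (Fin n) F V, ∀ l : Fin n → F,
          ν (∑ i, l i • e i) = ⨆ i, ‖l i‖ * ν (e i) := by
  intro n
  induction n with
  | zero =>
    intro V _ _ _ hdim ν hν0 hνnn hsmul hna hvals
    haveI : Subsingleton V := Module.finrank_zero_iff.mp hdim
    refine ⟨Module.Basis.empty V, fun l => ?_⟩
    have h1 : (∑ i : Fin 0, l i • (Module.Basis.empty V : Module.Basis (Fin 0) F V) i) = (0 : V) := by simp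
    rw [h1, (hν0 0).mpr rfl, Real.iSup_of_isEmpty]
  | succ n ih =>
    intro V _ _ _ hdim ν hν0 hνnn hsmul hna hvals
    letI : NormedAddCommGroup V := AddGroupNorm.toNormedAddCommGroup
      { toFun := ν
        map_zero' := (hν0 0).mpr rfl
        add_le' := fun x y => (hna x y).trans
          (max_le (le_add_of_nonneg_right (hνnn y)) (le_add_of_nonneg_left (hνnn x)))
        neg' := fun x => by
          have h : (-x) = (-1 : F) • x := by simp
          rw [h, hsmul]; simp
        eq_zero_of_map_eq_zero' := fun x hx => (hν0 x).mp hx }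
    letI : NormedSpace F V := ⟨fun a v => le_of_eq (hsmul a v)⟩
    have hnorm : ∀ v : V, ‖v‖ = ν v := fun _ => rfl
    have b : Module.Basis (Fin (n + 1)) F V := Module.finBasisOfFinrankEq F V hdim
    set W : Submodule F V := Submodule.span F (Set.range fun i : Fin n => b i.castSucc) with hW
    have hli : LinearIndependent F (fun i : Fin n => b i.castSucc) :=
      b.linearIndependent.comp _ (Fin.castSucc_injective n)
    have hWrank : Module.finrank F W = n := by
      rw [finrank_span_eq_card hli, Fintype.card_fin]
    set v : V := b (Fin.last n) with hv
    have hvW : v ∉ W := by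
      have h1 : (Set.range fun i : Fin n => b i.castSucc)
          = b '' Set.range (Fin.castSucc : Fin n → Fin (n + 1)) := by
        rw [← Set.range_comp]; rfl
      rw [hW, h1]
      refine b.linearIndependent.notMem_span_image ?_
      rintro ⟨j, hj⟩
      exact (Fin.castSucc_lt_last j).ne hj
    have hWclosed : IsClosed (W : Set V) := Submodule.closed_of_finiteDimensional W
    obtain ⟨ε, hε0, hε⟩ : ∃ ε > 0, ∀ w ∈ W, ε ≤ ν (v - w) := by
      have hmem : (W : Set V)ᶜ ∈ nhds v := hWclosed.isOpen_compl.mem_nhds hvW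
      rcases Metric.mem_nhds_iff.mp hmem with ⟨ε, hε0, hball⟩
      refine ⟨ε, hε0, fun w hw => ?_⟩
      by_contra hcon
      push_neg at hcon
      have hwball : w ∈ Metric.ball v ε := by
        rw [Metric.mem_ball, dist_comm, dist_eq_norm, hnorm]
        exact hcon
      exact hball hwball hw
    have hv0 : v ≠ 0 := fun h => hvW (h ▸ W.zero_mem)
    obtain ⟨w₀, hw₀W, hmin⟩ : ∃ w₀ ∈ W, ∀ w ∈ W, ν (v - w₀) ≤ ν (v - w) := by
      obtain ⟨m, hm⟩ := exists_pow_lt_of_lt_one hε0 hc1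
      set P : ℤ → Prop := fun k => ∃ w ∈ W, ν (v - w) = c ^ k with hP
      have hbdd : ∀ k, P k → k ≤ (m : ℤ) := by
        rintro k ⟨w, hwW, hk⟩
        by_contra hcon
        push_neg at hcon
        have h2 : c ^ k ≤ c ^ (m : ℤ) :=
          zpow_le_zpow_right_of_le_one₀ hc0 hc1.le hcon.le
        rw [zpow_natCast] at h2
        exact absurd (hε w hwW) (by rw [hk]; exact not_le.mpr (lt_of_le_of_lt h2 hm))
      have hinh : ∃ k, P k := by
        obtain ⟨k, hk⟩ := hvals v hv0
        exact ⟨k, 0, W.zero_mem, by simpa using hk⟩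
      obtain ⟨k₀, ⟨w₀, hw₀W, hw₀⟩, hmax⟩ := Int.exists_greatest_of_bdd ⟨m, hbdd⟩ hinh
      refine ⟨w₀, hw₀W, fun w hw => ?_⟩
      have hvw : v - w ≠ 0 := sub_ne_zero.mpr (fun h => hvW (h ▸ hw))
      obtain ⟨j, hj⟩ := hvals _ hvw
      rw [hw₀, hj]
      exact zpow_le_zpow_right_of_le_one₀ hc0 hc1.le (hmax j ⟨w, hw, hj⟩)
    set e₀ : V := v - w₀ with he₀
    have he₀0 : e₀ ≠ 0 := sub_ne_zero.mpr (fun h => hvW (h ▸ hw₀W))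
    have hνe₀ : 0 < ν e₀ := lt_of_le_of_ne (hνnn e₀) (fun h => he₀0 ((hν0 e₀).mp h.symm))
    have hmin' : ∀ u ∈ W, ν e₀ ≤ ν (e₀ + u) := by
      intro u hu
      have h : e₀ + u = v - (w₀ - u) := by rw [he₀]; abel
      rw [h]
      exact hmin _ (W.sub_mem hw₀W hu)
    have hνneg : ∀ x : V, ν (-x) = ν x := by
      intro x
      have h : (-x) = (-1 : F) • x := by simp
      rw [h, hsmul]; simp
    have hkey : ∀ (a : F) (u : V), u ∈ W → ν (u + a • e₀) = max (‖a‖ * ν e₀) (ν u) := by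
      intro a u hu
      rcases eq_or_ne a 0 with rfl | ha
      · simp [max_eq_right (hνnn u)]
      · have hA : ‖a‖ * ν e₀ ≤ ν (u + a • e₀) := by
          have h1 : ν (u + a • e₀) = ‖a‖ * ν (e₀ + a⁻¹ • u) := by
            rw [← hsmul]
            congr 1
            rw [smul_add, smul_smul, mul_inv_cancel₀ ha, one_smul]
            abel
          rw [h1]
          exact mul_le_mul_of_nonneg_left (hmin' _ (W.smul_mem _ hu)) (norm_nonneg a)
        have hu' : ν u ≤ ν (u + a • e₀) := by
          have h2 : ν u ≤ max (ν (u + a • e₀)) (ν (-(a • e₀))) := by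
            have h3 : u = (u + a • e₀) + (-(a • e₀)) := by abel
            calc ν u = ν ((u + a • e₀) + (-(a • e₀))) := by rw [← h3]
              _ ≤ _ := hna _ _
          rw [hνneg, hsmul, max_eq_left hA] at h2
          exact h2
        refine le_antisymm ?_ (max_le hA hu')
        have h4 := hna u (a • e₀)
        rwa [hsmul, max_comm] at h4
    obtain ⟨eW, heW⟩ := ih W hWrank (fun w : W => ν ↑w)
      (fun w => by
        show ν (w : V) = 0 ↔ w = 0
        rw [hν0, Submodule.coe_eq_zero])
      (fun w => hνnn _)
      (fun a w => by
        show ν ((a • w : W) : V) = ‖a‖ * ν (w : V)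
        rw [Submodule.coe_smul]; exact hsmul a ↑w)
      (fun x y => by
        show ν ((x + y : W) : V) ≤ max (ν (x : V)) (ν (y : V))
        rw [Submodule.coe_add]; exact hna _ _)
      (fun x hx => hvals ↑x (by simpa using hx))
    set g : Fin (n + 1) → V := Fin.snoc (fun i => ((eW i : V))) e₀ with hg
    have hgcast : ∀ i : Fin n, g i.castSucc = (eW i : V) := fun i => Fin.snoc_castSucc _ _ _
    have hglast : g (Fin.last n) = e₀ := Fin.snoc_last _ _
    have hWle : W ≤ Submodule.span F (Set.range g) := by
      have h1 : W = Submodule.span F (W.subtype '' Set.range eW) := by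
        rw [← Submodule.map_span, eW.span_eq, Submodule.map_subtype_top]
      rw [h1]
      apply Submodule.span_le.mpr
      rintro x ⟨w, ⟨i, rfl⟩, rfl⟩
      have h2 : W.subtype (eW i) = g i.castSucc := (hgcast i).symm
      rw [h2]
      exact Submodule.subset_span ⟨_, rfl⟩
    have hspan : ⊤ ≤ Submodule.span F (Set.range g) := by
      rw [← b.span_eq]
      apply Submodule.span_le.mpr
      rintro x ⟨i, rfl⟩
      induction i using Fin.lastCases with
      | last =>
        have h : b (Fin.last n) = e₀ + w₀ := by rw [he₀, hv]; abel
        rw [h]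
        exact Submodule.add_mem _
          (Submodule.subset_span ⟨Fin.last n, hglast⟩) (hWle hw₀W)
      | cast i =>
        exact hWle (Submodule.subset_span ⟨i, rfl⟩)
    have hcard : Fintype.card (Fin (n + 1)) = Module.finrank F V := by
      rw [Fintype.card_fin, hdim]
    refine ⟨basisOfTopLeSpanOfCardEqFinrank g hspan hcard, fun l => ?_⟩
    have he : ⇑(basisOfTopLeSpanOfCardEqFinrank g hspan hcard) = g :=
      coe_basisOfTopLeSpanOfCardEqFinrank g hspan hcard
    simp only [he]
    set u : W := ∑ i : Fin n, l i.castSucc • eW i with hu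
    have hcoe : (u : V) = ∑ i : Fin n, l i.castSucc • (eW i : V) := by
      rw [hu]; push_cast; rfl
    have hsum : (∑ i, l i • g i) = (u : V) + l (Fin.last n) • e₀ := by
      rw [Fin.sum_univ_castSucc, hcoe, hglast]
      congr 1
      exact Finset.sum_congr rfl fun i _ => by rw [hgcast]
    rw [hsum, hkey (l (Fin.last n)) _ u.2]
    have hνu : ν (u : V) = ⨆ i : Fin n, ‖l i.castSucc‖ * ν (eW i : V) := heW fun i => l i.castSucc
    rw [hνu]
    rw [sup_split (fun i => ‖l i‖ * ν (g i)) (fun i => mul_nonneg (norm_nonneg _) (hνnn _))]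
    simp only [hgcast, hglast]
    rw [max_comm]

/-- Goldman–Iwahori splitting and the lattice of the base-changed norm.
Let `F` be a non-archimedean local field (complete, discretely valued with uniformizer `ϖ`,
`‖ϖ‖ < 1`), and let `(V, ν)` be a finite-dimensional normed `F`-vector space whose norm takes
values in `|ϖ|^{(1/r)ℤ}` — equivalently in `‖ϖ'‖^ℤ`, where `ϖ'` is an `r`-th root of `ϖ` in an
isometric extension `E = F(ϖ^{1/r})`.  Then there is a basis `(eᵢ)` of `V` diagonalizing the
norm, `ν(∑ λᵢ eᵢ) = maxᵢ ‖λᵢ‖ ν(eᵢ)`, with `ν(eᵢ) = ‖ϖ'‖^{-wᵢ}` for integers `wᵢ`; and the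
unit ball of the base-changed norm `μ ↦ maxᵢ ‖μᵢ‖ ν(eᵢ)` on `V ⊗_F E` (in the coordinates of
this basis) is the free `O_E`-lattice spanned by the `eᵢ ⊗ ϖ'^{wᵢ}`, i.e. it consists exactly
of the coordinate vectors with `‖μᵢ‖ ≤ ‖ϖ'‖^{wᵢ}` for all `i`. -/
theorem stmt8
    (F E : Type*) [NontriviallyNormedField F] [NontriviallyNormedField E] [CompleteSpace F]
    (ι : F →+* E) (hι : ∀ x : F, ‖ι x‖ = ‖x‖)
    (ϖ : F) (hϖ0 : ϖ ≠ 0) (hϖ : ‖ϖ‖ < 1)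
    (hdisc : ∀ x : F, x ≠ 0 → ∃ k : ℤ, ‖x‖ = ‖ϖ‖ ^ k)
    (r : ℕ) (hr : 1 ≤ r) (ϖ' : E) (hϖ' : ϖ' ^ r = ι ϖ)
    (V : Type*) [AddCommGroup V] [Module F V] [FiniteDimensional F V]
    (n : ℕ) (hn : 1 ≤ n) (hdim : Module.finrank F V = n)
    (ν : V → ℝ) (hν0 : ∀ v : V, ν v = 0 ↔ v = 0) (hνnn : ∀ v, 0 ≤ ν v)
    (hsmul : ∀ (a : F) (v : V), ν (a • v) = ‖a‖ * ν v)
    (hna : ∀ v w : V, ν (v + w) ≤ max (ν v) (ν w))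
    (hvals : ∀ v : V, v ≠ 0 → ∃ k : ℤ, ν v = ‖ϖ'‖ ^ k) :
    ∃ (e : Module.Basis (Fin n) F V) (w : Fin n → ℤ),
      (∀ l : Fin n → F, ν (∑ i, l i • e i) = ⨆ i, ‖l i‖ * ν (e i)) ∧
      (∀ i, ν (e i) = ‖ϖ'‖ ^ (-(w i))) ∧
      (∀ μ : Fin n → E, (⨆ i, ‖μ i‖ * ν (e i)) ≤ 1 ↔ ∀ i, ‖μ i‖ ≤ ‖ϖ'‖ ^ (w i)) := by
  have hpow : ‖ϖ'‖ ^ r = ‖ϖ‖ := by rw [← norm_pow, hϖ', hι]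
  have hϖpos : 0 < ‖ϖ‖ := norm_pos_iff.mpr hϖ0
  have hc0 : 0 < ‖ϖ'‖ := by
    rcases lt_or_eq_of_le (norm_nonneg ϖ') with h | h
    · exact h
    · exfalso
      rw [← h, zero_pow (by omega : r ≠ 0)] at hpow
      exact hϖpos.ne hpow
  have hc1 : ‖ϖ'‖ < 1 := by
    by_contra h
    push_neg at h
    have h2 : (1 : ℝ) ^ r ≤ ‖ϖ'‖ ^ r := pow_le_pow_left₀ zero_le_one h r
    rw [one_pow, hpow] at h2
    exact absurd hϖ (not_lt.mpr h2)
  obtain ⟨e, he⟩ := gi_aux hc0 hc1 n V hdim ν hν0 hνnn hsmul hna hvals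
  haveI : Nonempty (Fin n) := Fin.pos_iff_nonempty.mp hn
  have hk : ∀ i, ∃ k : ℤ, ν (e i) = ‖ϖ'‖ ^ k := fun i => hvals (e i) (e.ne_zero i)
  choose k hkk using hk
  refine ⟨e, fun i => -(k i), he, fun i => by rw [neg_neg]; exact hkk i, fun μ => ?_⟩
  have hνe : ∀ i, ν (e i) = (‖ϖ'‖ ^ (-(k i) : ℤ))⁻¹ := by
    intro i
    rw [hkk i, ← zpow_neg, neg_neg]
  constructor
  · intro h i
    have bdd : BddAbove (Set.range fun i => ‖μ i‖ * ν (e i)) := (Set.finite_range _).bddAbove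
    have h1 : ‖μ i‖ * ν (e i) ≤ 1 := le_trans (le_ciSup bdd i) h
    rw [hνe i, ← div_eq_mul_inv, div_le_one (zpow_pos hc0 _)] at h1
    exact h1
  · intro h
    refine Real.iSup_le (fun i => ?_) zero_le_one
    rw [hνe i, ← div_eq_mul_inv, div_le_one (zpow_pos hc0 _)]
    exact h i
end

section
/- Let S be a commutative torsion-free monoid with a continuous action of Ẑ (generated by σ) such that the addition map has σ-finite fibres, and let CF(S) be the ring of counting functions on S with convolution product. Then the Adams operations ψ_m, defined by ψ_m(f)(x)_n = Σ_{y ∈ S_{nm}, Tr_{mn/n}(y) = x} f(y)_{nm} for x ∈ S_n (and 0 otherwise), are ring homomorphisms with respect to the convolution product, satisfy ψ_1 = id and ψ_m ∘ ψ_{m'} = ψ_{mm'}, and hence define a λ-ring structure on CF(S). -/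
open scoped Classical

noncomputable section

/-- The ring of values `𝒱 = ∏_{n ≥ 1} ℚ̄`: we record a counting function as a family of
values in `ℚ̄` indexed by `n`. -/
abbrev Kbar : Type := AlgebraicClosure ℚ

variable {S S' : Type}

/-- `f : S → (n ↦ ℚ̄)` is a counting function for the `Ẑ`-action generated by `σ` if
`f(x)_n = 0` unless `x` is fixed by `σ^n`. -/
def IsCF [AddCommMonoid S] (σ : AddAut S) (f : S → ℕ → Kbar) : Prop :=
  ∀ x n, 1 ≤ n → (n • σ) x ≠ x → f x n = 0

/-- σ-finiteness: all fixed point sets `S_n` are finite. -/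
def SigmaFinite [AddCommMonoid S] (σ : AddAut S) : Prop :=
  ∀ n : ℕ, 1 ≤ n → {x : S | (n • σ) x = x}.Finite

/-- Torsion-freeness of the monoid `S`. -/
def TorsionFreeMonoid (S : Type) [AddCommMonoid S] : Prop :=
  ∀ (k : ℕ) (x y : S), 1 ≤ k → k • x = k • y → x = y

/-- The convolution product `(f·g)(x)_n = ∑_{x' + x'' = x, x', x'' ∈ S_n} f(x')_n g(x'')_n`. -/
def conv [AddCommMonoid S] (σ : AddAut S) (f g : S → ℕ → Kbar) : S → ℕ → Kbar :=
  fun x n => ∑ᶠ (p : S × S)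
    (_ : p.1 + p.2 = x ∧ (n • σ) p.1 = p.1 ∧ (n • σ) p.2 = p.2), f p.1 n * g p.2 n

/-- The trace map `Tr_{nm/n} : S_{nm} → S_n`, `y ↦ ∑_{i=1}^m σ^{in}(y)`. -/
def trA [AddCommMonoid S] (σ : AddAut S) (n m : ℕ) (y : S) : S :=
  ∑ i ∈ Finset.range m, (((i + 1) * n) • σ) y

/-- The Adams operation `ψ_m(f)(x)_n = ∑_{y ∈ S_{nm}, Tr_{nm/n}(y) = x} f(y)_{nm}` for
`x ∈ S_n`, and `0` otherwise. -/
def adams [AddCommMonoid S] (σ : AddAut S) (m : ℕ) (f : S → ℕ → Kbar) : S → ℕ → Kbar :=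
  fun x n =>
    if (n • σ) x = x then
      ∑ᶠ (y : S) (_ : ((n * m) • σ) y = y ∧ trA σ n m y = x), f y (n * m)
    else 0

/-- Convolution powers `f^s`. -/
def convPow [AddCommMonoid S] (σ : AddAut S) (f : S → ℕ → Kbar) : ℕ → (S → ℕ → Kbar)
  | 0 => fun x _ => if x = 0 then 1 else 0
  | s + 1 => conv σ f (convPow σ f s)

/-- The exponential `exp(f) = ∑_{s ≥ 0} f^s / s!` (convolution powers). -/
def expCF [AddCommMonoid S] (σ : AddAut S) (f : S → ℕ → Kbar) : S → ℕ → Kbar :=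
  fun x n => ∑ᶠ s : ℕ, ((Nat.factorial s : Kbar))⁻¹ * convPow σ f s x n

/-- The logarithm `log(1 + f) = ∑_{s ≥ 1} (-1)^{s-1} f^s / s` (convolution powers). -/
def log1p [AddCommMonoid S] (σ : AddAut S) (f : S → ℕ → Kbar) : S → ℕ → Kbar :=
  fun x n => ∑ᶠ s : ℕ,
    if 1 ≤ s then ((-1 : Kbar) ^ (s - 1) / (s : Kbar)) * convPow σ f s x n else 0

/-- The plethystic exponential `Sym(f) = exp(∑_{m ≥ 1} ψ_m(f)/m)`. -/
def SymCF [AddCommMonoid S] (σ : AddAut S) (f : S → ℕ → Kbar) : S → ℕ → Kbar :=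
  expCF σ (fun x n => ∑ᶠ m : ℕ, if 1 ≤ m then ((m : Kbar))⁻¹ * adams σ m f x n else 0)

/-- The plethystic logarithm `Log(1 + f) = ∑_{m ≥ 1} (μ(m)/m) ψ_m(log(1 + f))`. -/
def LogCF [AddCommMonoid S] (σ : AddAut S) (f : S → ℕ → Kbar) : S → ℕ → Kbar :=
  fun x n => ∑ᶠ m : ℕ,
    if 1 ≤ m then
      (((ArithmeticFunction.moebius m : ℤ) : Kbar) / (m : Kbar)) * adams σ m (log1p σ f) x n
    else 0

/-- The proper pushforward `φ_!(f)(x) = ∑_{y ∈ φ⁻¹(x)} f(y)`. -/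
def push [AddCommMonoid S] [AddCommMonoid S'] (σ₁ : AddAut S) (φ : S →+ S')
    (f : S → ℕ → Kbar) : S' → ℕ → Kbar :=
  fun x n => ∑ᶠ (y : S) (_ : φ y = x ∧ (n • σ₁) y = y), f y n

end

/-! ### Auxiliary lemmas -/

noncomputable section AuxStmt9

variable {S : Type} [AddCommMonoid S]

private lemma powApplyAdd (σ : AddAut S) (a b : ℕ) (x : S) :
    ((a + b) • σ) x = (a • σ) ((b • σ) x) := by
  rw [add_nsmul]; rfl

private lemma fixedMul (σ : AddAut S) {n : ℕ} {x : S} (h : (n • σ) x = x) (k : ℕ) :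
    ((n * k) • σ) x = x := by
  induction k with
  | zero => simp
  | succ k ih => rw [Nat.mul_succ, powApplyAdd, h, ih]

private lemma rotSum {M : Type} [AddCommMonoid M] (g : ℕ → M) (N : ℕ) (hN : 1 ≤ N)
    (hper : ∀ j, g (j + N) = g j) (k : ℕ) :
    ∑ j ∈ Finset.range N, g (j + k) = ∑ j ∈ Finset.range N, g j := by
  induction k with
  | zero => simp
  | succ k ih =>
    have h1 : ∑ j ∈ Finset.range N, g (j + (k + 1)) = ∑ j ∈ Finset.range N, g (j + k) := by
      obtain ⟨n, rfl⟩ : ∃ n, N = n + 1 := ⟨N - 1, by omega⟩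
      rw [Finset.sum_range_succ, Finset.sum_range_succ' (fun j => g (j + k)) n]
      congr 1
      · exact Finset.sum_congr rfl fun j _ => by ring_nf
      · have := hper k
        rw [show k + (n + 1) = n + (k + 1) by ring] at this
        rw [this]; ring_nf
    rw [h1, ih]

private lemma trA_add (σ : AddAut S) (n m : ℕ) (a b : S) :
    trA σ n m (a + b) = trA σ n m a + trA σ n m b := by
  simp only [trA, map_add, Finset.sum_add_distrib]

private lemma trA_smul (σ : AddAut S) (m : ℕ) (y : S) : trA σ 0 m y = m • y := by
  simp [trA]

private lemma trA_one (σ : AddAut S) (n : ℕ) (y : S) : trA σ n 1 y = (n • σ) y := by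
  simp [trA]

private lemma trA_fixed (σ : AddAut S) {n m : ℕ} (hm : 1 ≤ m) {z : S}
    (hz : ((n * m) • σ) z = z) :
    (n • σ) (trA σ n m z) = trA σ n m z := by
  have hper : ∀ j, (((j + m + 1) * n) • σ) z = (((j + 1) * n) • σ) z := by
    intro j
    have h : (j + m + 1) * n = (j + 1) * n + n * m := by ring
    rw [h, powApplyAdd, hz]
  have h1 : (n • σ) (trA σ n m z) = ∑ i ∈ Finset.range m, (((i + 1 + 1) * n) • σ) z := by
    simp only [trA, map_sum]
    refine Finset.sum_congr rfl fun i _ => ?_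
    rw [show (i + 1 + 1) * n = n + (i + 1) * n by ring, powApplyAdd]
  rw [h1, trA]
  exact rotSum (fun j => (((j + 1) * n) • σ) z) m hm hper 1

private lemma trA_trA (σ : AddAut S) {n m m' : ℕ} (hm : 1 ≤ m) (hm' : 1 ≤ m') {z : S}
    (hz : ((n * (m * m')) • σ) z = z) :
    trA σ n m (trA σ (n * m) m' z) = trA σ n (m * m') z := by
  have key : trA σ n m (trA σ (n * m) m' z)
      = ∑ i ∈ Finset.range m, ∑ k ∈ Finset.range m', (((i + k * m + m + 1) * n) • σ) z := by
    simp only [trA, map_sum]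
    refine Finset.sum_congr rfl fun i _ => Finset.sum_congr rfl fun k _ => ?_
    rw [show (i + k * m + m + 1) * n = (i + 1) * n + (k + 1) * (n * m) by ring, powApplyAdd]
  rw [key]
  have hper : ∀ j, (((j + m * m' + 1) * n) • σ) z = (((j + 1) * n) • σ) z := by
    intro j
    have h : (j + m * m' + 1) * n = (j + 1) * n + n * (m * m') := by ring
    rw [h, powApplyAdd, hz]
  set g : ℕ → S := fun j => (((j + 1) * n) • σ) z with hg
  have hNN : 1 ≤ m * m' := Nat.one_le_iff_ne_zero.2 (by positivity)
  have step1 : ∑ i ∈ Finset.range m, ∑ k ∈ Finset.range m', g (i + k * m + m)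
      = ∑ j ∈ Finset.range (m * m'), g (j + m) := by
    rw [← Finset.sum_product']
    apply Finset.sum_nbij' (i := fun p => p.1 + p.2 * m) (j := fun j => (j % m, j / m))
    · rintro ⟨a, b⟩ hab
      simp only [Finset.mem_product, Finset.mem_range] at hab
      refine Finset.mem_range.2 ?_
      calc a + b * m < m + b * m := by omega
        _ = (b + 1) * m := by ring
        _ ≤ m' * m := Nat.mul_le_mul_right m hab.2
        _ = m * m' := Nat.mul_comm _ _
    · intro j hj
      rw [Finset.mem_range] at hj
      simp only [Finset.mem_product, Finset.mem_range]
      exact ⟨Nat.mod_lt _ hm, Nat.div_lt_of_lt_mul hj⟩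
    · rintro ⟨a, b⟩ hab
      simp only [Finset.mem_product, Finset.mem_range] at hab
      have h1 : (a + b * m) % m = a := by
        rw [Nat.add_mul_mod_self_right, Nat.mod_eq_of_lt hab.1]
      have h2 : (a + b * m) / m = b := by
        rw [Nat.add_mul_div_right _ _ (by omega : 0 < m), Nat.div_eq_of_lt hab.1, Nat.zero_add]
      simp [h1, h2]
    · intro j _
      simp [Nat.mod_add_div']
    · rintro ⟨a, b⟩ _; rfl
  calc ∑ i ∈ Finset.range m, ∑ k ∈ Finset.range m', (((i + k * m + m + 1) * n) • σ) z
      = ∑ j ∈ Finset.range (m * m'), g (j + m) := step1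
    _ = ∑ j ∈ Finset.range (m * m'), g j := rotSum g (m * m') hNN hper m
    _ = trA σ n (m * m') z := rfl

private lemma finsum_cond_eq_sum' {α : Type} {P : α → Prop} (F : α → Kbar) (t : Finset α)
    (h : ∀ a, P a ↔ a ∈ t) : ∑ᶠ (a) (_ : P a), F a = ∑ a ∈ t, F a :=
  finsum_cond_eq_sum_of_cond_iff F (fun {a} _ => h a)

private lemma finsum_cond_false {α : Type} {P : α → Prop} (F : α → Kbar)
    (h : ∀ a, ¬ P a) : (∑ᶠ (a) (_ : P a), F a) = 0 := by
  rw [finsum_cond_eq_sum' F ∅ (fun a => by simp [h a])]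
  simp

private lemma finsum_cond_unique {α : Type} {P : α → Prop} (F : α → Kbar) (x : α)
    (hx : P x) (hu : ∀ a, P a → a = x) : (∑ᶠ (a) (_ : P a), F a) = F x := by
  rw [finsum_cond_eq_sum' F {x} (fun a => by
    simp only [Finset.mem_singleton]
    exact ⟨fun h => hu a h, fun h => h ▸ hx⟩)]
  simp

private lemma finsum_cond_zero {α : Type} {P : α → Prop} (F : α → Kbar)
    (h : ∀ a, P a → F a = 0) : (∑ᶠ (a) (_ : P a), F a) = 0 := by
  rw [finsum_cond_eq_sum_of_cond_iff F (t := ∅) (fun {a} hFa => by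
    simp only [Finset.notMem_empty, iff_false]
    exact fun hPa => hFa (h a hPa))]
  simp

end AuxStmt9

/-- On the ring of counting functions of a commutative torsion-free
`Ẑ`-monoid `S` with σ-finite data, the Adams operations `ψ_m` are ring homomorphisms for the
convolution product, satisfy `ψ_1 = id` and `ψ_m ∘ ψ_{m'} = ψ_{mm'}`; hence they define a
λ-ring structure on the counting functions. -/
theorem stmt9 {S : Type} [AddCommMonoid S] (σ : AddAut S)
    (hfin : SigmaFinite σ) (htf : TorsionFreeMonoid S)
    (hcont : ∀ x : S, ∃ n : ℕ, 1 ≤ n ∧ (n • σ) x = x) :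
    (∀ (m : ℕ) (f g : S → ℕ → Kbar), 1 ≤ m → IsCF σ f → IsCF σ g →
        adams σ m (conv σ f g) = conv σ (adams σ m f) (adams σ m g)) ∧
    (∀ f : S → ℕ → Kbar, IsCF σ f → adams σ 1 f = f) ∧
    (∀ (m m' : ℕ) (f : S → ℕ → Kbar), 1 ≤ m → 1 ≤ m' → IsCF σ f →
        adams σ m (adams σ m' f) = adams σ (m * m') f) := by
  refine ⟨?_, ?_, ?_⟩
  · -- ψ_m is a ring homomorphism
    intro m f g hm hf hg
    funext x n
    by_cases hx : (n • σ) x = x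
    swap
    · -- both sides vanish
      rw [adams, if_neg hx]
      symm
      rw [conv]
      exact finsum_cond_false _ (fun p hp =>
        hx (by rw [← hp.1, map_add, hp.2.1, hp.2.2]))
    by_cases hn : n = 0
    · -- the case n = 0, via torsion-freeness
      subst hn
      simp only [adams, conv, Nat.zero_mul, zero_nsmul, AddAut.zero_apply, trA_smul,
        eq_self_iff_true, if_true, true_and, and_true]
      by_cases hy0 : ∃ y0 : S, m • y0 = x
      · obtain ⟨y0, hy0⟩ := hy0
        have huniq : ∀ a : S, m • a = x → a = y0 := fun a ha =>
          htf m a y0 hm (ha.trans hy0.symm)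
        rw [finsum_cond_unique (P := fun y => m • y = x)
          (fun y => ∑ᶠ (p : S × S) (_ : p.1 + p.2 = y), f p.1 0 * g p.2 0) y0 hy0 huniq]
        -- RHS as a finsum over the set V = {p | p.1 + p.2 = x}
        set h : S × S → Kbar := fun p =>
          (∑ᶠ (y : S) (_ : m • y = p.1), f y 0) * ∑ᶠ (y : S) (_ : m • y = p.2), g y 0 with hh
        have hsupp : ∀ p : S × S, p.1 + p.2 = x → h p ≠ 0 →
            ∃ q : S × S, q.1 + q.2 = y0 ∧ (m • q.1, m • q.2) = p := by
          intro p hpx hp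
          have h1 : (∑ᶠ (y : S) (_ : m • y = p.1), f y 0) ≠ 0 := fun h0 => hp (by
            rw [hh]; simp [h0])
          have h2 : (∑ᶠ (y : S) (_ : m • y = p.2), g y 0) ≠ 0 := fun h0 => hp (by
            rw [hh]; simp [h0])
          have he1 : ∃ y1 : S, m • y1 = p.1 := by
            by_contra hc; push_neg at hc
            exact h1 (finsum_cond_false _ hc)
          have he2 : ∃ y2 : S, m • y2 = p.2 := by
            by_contra hc; push_neg at hc
            exact h2 (finsum_cond_false _ hc)
          obtain ⟨y1, hy1⟩ := he1
          obtain ⟨y2, hy2⟩ := he2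
          have hsum : m • (y1 + y2) = x := by rw [smul_add, hy1, hy2, hpx]
          exact ⟨(y1, y2), huniq _ hsum, by rw [hy1, hy2]⟩
        have einj : Set.InjOn (fun q : S × S => (m • q.1, m • q.2))
            {q : S × S | q.1 + q.2 = y0} := by
          intro q _ q' _ hqq
          have h1 := congrArg Prod.fst hqq
          have h2 := congrArg Prod.snd hqq
          exact Prod.ext (htf m _ _ hm h1) (htf m _ _ hm h2)
        have himg : (fun q : S × S => (m • q.1, m • q.2)) '' {q : S × S | q.1 + q.2 = y0}
            ⊆ {p : S × S | p.1 + p.2 = x} := by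
          rintro _ ⟨q, hq, rfl⟩
          simp only [Set.mem_setOf_eq] at hq ⊢
          rw [← smul_add, hq, hy0]
        calc (∑ᶠ (p : S × S) (_ : p.1 + p.2 = y0), f p.1 0 * g p.2 0)
            = ∑ᶠ q ∈ {q : S × S | q.1 + q.2 = y0},
                h ((fun q : S × S => (m • q.1, m • q.2)) q) := by
              apply finsum_mem_congr rfl
              intro q _
              have hq1 : (∑ᶠ (y : S) (_ : m • y = m • q.1), f y 0) = f q.1 0 :=
                finsum_cond_unique (P := fun y => m • y = m • q.1) (fun y => f y 0) q.1 rfl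
                  (fun a ha => htf m a q.1 hm ha)
              have hq2 : (∑ᶠ (y : S) (_ : m • y = m • q.2), g y 0) = g q.2 0 :=
                finsum_cond_unique (P := fun y => m • y = m • q.2) (fun y => g y 0) q.2 rfl
                  (fun a ha => htf m a q.2 hm ha)
              rw [hh]
              simp only [hq1, hq2]
          _ = ∑ᶠ p ∈ (fun q : S × S => (m • q.1, m • q.2)) ''
                {q : S × S | q.1 + q.2 = y0}, h p := (finsum_mem_image einj).symm
          _ = ∑ᶠ p ∈ {p : S × S | p.1 + p.2 = x}, h p := by
              apply finsum_mem_inter_support_eq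
              apply Set.ext
              rintro p
              simp only [Set.mem_inter_iff, Function.mem_support]
              constructor
              · rintro ⟨hp1, hp2⟩
                exact ⟨himg hp1, hp2⟩
              · rintro ⟨hp1, hp2⟩
                obtain ⟨q, hq, hqe⟩ := hsupp p hp1 hp2
                exact ⟨⟨q, hq, hqe⟩, hp2⟩
          _ = ∑ᶠ (p : S × S) (_ : p.1 + p.2 = x),
                (∑ᶠ (y : S) (_ : m • y = p.1), f y 0) *
                  ∑ᶠ (y : S) (_ : m • y = p.2), g y 0 := rfl
      · push_neg at hy0
        rw [finsum_cond_false (P := fun y => m • y = x)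
          (fun y => ∑ᶠ (p : S × S) (_ : p.1 + p.2 = y), f p.1 0 * g p.2 0)
          (fun y hy => hy0 y hy)]
        symm
        apply finsum_cond_zero
        intro p hp
        by_contra hc
        have h1 : (∑ᶠ (y : S) (_ : m • y = p.1), f y 0) ≠ 0 := fun h0 => hc (by
          simp [h0])
        have h2 : (∑ᶠ (y : S) (_ : m • y = p.2), g y 0) ≠ 0 := fun h0 => hc (by
          simp [h0])
        have he1 : ∃ y1 : S, m • y1 = p.1 := by
          by_contra hcc; push_neg at hcc
          exact h1 (finsum_cond_false _ hcc)
        have he2 : ∃ y2 : S, m • y2 = p.2 := by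
          by_contra hcc; push_neg at hcc
          exact h2 (finsum_cond_false _ hcc)
        obtain ⟨y1, hy1⟩ := he1
        obtain ⟨y2, hy2⟩ := he2
        exact hy0 (y1 + y2) (by rw [smul_add, hy1, hy2, hp])
    · -- the case n ≥ 1, via σ-finiteness
      have hn1 : 1 ≤ n := Nat.one_le_iff_ne_zero.2 hn
      have hN1 : 1 ≤ n * m := Nat.one_le_iff_ne_zero.2 (by positivity)
      have hSN := hfin (n * m) hN1
      have hSn := hfin n hn1
      set SN : Finset S := hSN.toFinset with hSNdef
      set Sn : Finset S := hSn.toFinset with hSndef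
      have hmemN : ∀ y : S, y ∈ SN ↔ ((n * m) • σ) y = y := by
        intro y; rw [hSNdef, Set.Finite.mem_toFinset]; rfl
      have hmemn : ∀ y : S, y ∈ Sn ↔ (n • σ) y = y := by
        intro y; rw [hSndef, Set.Finite.mem_toFinset]; rfl
      set T : Finset (S × S) :=
        (SN ×ˢ SN).filter (fun p => trA σ n m (p.1 + p.2) = x) with hT
      have hmemT : ∀ p : S × S, p ∈ T ↔
          (((n * m) • σ) p.1 = p.1 ∧ ((n * m) • σ) p.2 = p.2) ∧
            trA σ n m (p.1 + p.2) = x := by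
        intro p
        rw [hT, Finset.mem_filter, Finset.mem_product, hmemN, hmemN]
      -- LHS
      have hLHS : adams σ m (conv σ f g) x n = ∑ p ∈ T, f p.1 (n * m) * g p.2 (n * m) := by
        rw [adams, if_pos hx]
        rw [finsum_cond_eq_sum' _ (SN.filter (fun y => trA σ n m y = x)) (fun y => by
          rw [Finset.mem_filter, hmemN])]
        have hstep : ∀ y ∈ SN.filter (fun y => trA σ n m y = x),
            conv σ f g y (n * m)
              = ∑ p ∈ T.filter (fun p => p.1 + p.2 = y), f p.1 (n * m) * g p.2 (n * m) := by
          intro y hy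
          rw [Finset.mem_filter, hmemN] at hy
          rw [conv]
          apply finsum_cond_eq_sum'
          intro p
          rw [Finset.mem_filter, hmemT]
          constructor
          · rintro ⟨h1, h2, h3⟩
            exact ⟨⟨⟨h2, h3⟩, by rw [h1, hy.2]⟩, h1⟩
          · rintro ⟨⟨⟨h2, h3⟩, _⟩, h1⟩
            exact ⟨h1, h2, h3⟩
        rw [Finset.sum_congr rfl hstep]
        apply Finset.sum_fiberwise_of_maps_to
        intro p hp
        rw [hmemT] at hp
        rw [Finset.mem_filter, hmemN]
        exact ⟨by rw [map_add, hp.1.1, hp.1.2], hp.2⟩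
      rw [hLHS, conv]
      rw [finsum_cond_eq_sum'
        (P := fun p : S × S => p.1 + p.2 = x ∧ (n • σ) p.1 = p.1 ∧ (n • σ) p.2 = p.2)
        _ ((Sn ×ˢ Sn).filter (fun p => p.1 + p.2 = x))
        (fun p => by
          rw [Finset.mem_filter, Finset.mem_product, hmemn, hmemn]
          tauto)]
      symm
      have hstep2 : ∀ p ∈ (Sn ×ˢ Sn).filter (fun p : S × S => p.1 + p.2 = x),
          adams σ m f p.1 n * adams σ m g p.2 n
            = ∑ q ∈ T.filter (fun q => (trA σ n m q.1, trA σ n m q.2) = p),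
                f q.1 (n * m) * g q.2 (n * m) := by
        intro p hp
        rw [Finset.mem_filter, Finset.mem_product, hmemn, hmemn] at hp
        rw [adams, if_pos hp.1.1, adams, if_pos hp.1.2]
        rw [finsum_cond_eq_sum' _ (SN.filter (fun y => trA σ n m y = p.1)) (fun y => by
          rw [Finset.mem_filter, hmemN])]
        rw [finsum_cond_eq_sum' _ (SN.filter (fun y => trA σ n m y = p.2)) (fun y => by
          rw [Finset.mem_filter, hmemN])]
        rw [Finset.sum_mul_sum]
        rw [← Finset.sum_product']
        have hseteq : (SN.filter (fun y => trA σ n m y = p.1)) ×ˢ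
              (SN.filter (fun y => trA σ n m y = p.2))
            = T.filter (fun q => (trA σ n m q.1, trA σ n m q.2) = p) := by
          apply Finset.ext
          intro q
          simp only [Finset.mem_product, Finset.mem_filter, hmemT, hmemN]
          constructor
          · rintro ⟨⟨hq1, ht1⟩, hq2, ht2⟩
            refine ⟨⟨⟨hq1, hq2⟩, ?_⟩, ?_⟩
            · rw [trA_add, ht1, ht2, hp.2]
            · exact Prod.ext ht1 ht2
          · rintro ⟨⟨⟨hq1, hq2⟩, _⟩, hpair⟩
            have h1 := congrArg Prod.fst hpair
            have h2 := congrArg Prod.snd hpair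
            simp only at h1 h2
            exact ⟨⟨hq1, h1⟩, hq2, h2⟩
        exact Finset.sum_congr hseteq (fun q _ => rfl)
      rw [Finset.sum_congr rfl hstep2]
      apply Finset.sum_fiberwise_of_maps_to
      intro q hq
      rw [hmemT] at hq
      rw [Finset.mem_filter, Finset.mem_product, hmemn, hmemn]
      exact ⟨⟨trA_fixed σ hm hq.1.1, trA_fixed σ hm hq.1.2⟩, by rw [← trA_add, hq.2]⟩
  · -- ψ_1 = id
    intro f hf
    funext x n
    by_cases hx : (n • σ) x = x
    · rw [adams, if_pos hx]
      have h1 : (∑ᶠ (y : S) (_ : ((n * 1) • σ) y = y ∧ trA σ n 1 y = x), f y (n * 1))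
          = f x (n * 1) := by
        apply finsum_cond_unique _ x
        · constructor
          · rw [mul_one]; exact hx
          · rw [trA_one]; exact hx
        · intro a ha
          obtain ⟨ha1, ha2⟩ := ha
          rw [mul_one] at ha1
          rw [trA_one] at ha2
          rw [← ha1, ha2]
      rw [h1, mul_one]
    · rw [adams, if_neg hx]
      have hn : 1 ≤ n := by
        rcases Nat.eq_zero_or_pos n with h | h
        · exact absurd (by simp [h]) hx
        · exact h
      exact (hf x n hn hx).symm
  · -- ψ_m ∘ ψ_{m'} = ψ_{mm'}
    intro m m' f hm hm' hf
    funext x n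
    by_cases hx : (n • σ) x = x
    swap
    · rw [adams, if_neg hx, adams, if_neg hx]
    by_cases hn : n = 0
    · -- n = 0, via torsion-freeness
      subst hn
      simp only [adams, Nat.zero_mul, zero_nsmul, AddAut.zero_apply, trA_smul,
        eq_self_iff_true, if_true, true_and]
      by_cases hex : ∃ z0 : S, (m * m') • z0 = x
      · obtain ⟨z0, hz0⟩ := hex
        have hmm' : 1 ≤ m * m' := Nat.one_le_iff_ne_zero.2 (by positivity)
        rw [finsum_cond_unique (P := fun z => (m * m') • z = x) (fun z => f z 0) z0 hz0
          (fun a ha => htf (m * m') a z0 hmm' (ha.trans hz0.symm))]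
        have hy0 : m • (m' • z0) = x := by rw [← mul_nsmul']; exact hz0
        rw [finsum_cond_unique (P := fun y => m • y = x)
          (fun y => ∑ᶠ (z : S) (_ : m' • z = y), f z 0) (m' • z0) hy0
          (fun a ha => htf m a (m' • z0) hm (ha.trans hy0.symm))]
        exact finsum_cond_unique (P := fun z => m' • z = m' • z0) (fun z => f z 0) z0 rfl
          (fun a ha => htf m' a z0 hm' ha)
      · push_neg at hex
        rw [finsum_cond_false (P := fun z => (m * m') • z = x) (fun z => f z 0)
          (fun z hz => hex z hz)]
        apply finsum_cond_zero
        intro y hy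
        apply finsum_cond_false
        intro z hz
        exact hex z (by rw [mul_nsmul', hz, hy])
    · -- n ≥ 1, via σ-finiteness
      have hn1 : 1 ≤ n := Nat.one_le_iff_ne_zero.2 hn
      have hNm : 1 ≤ n * m := Nat.one_le_iff_ne_zero.2 (by positivity)
      have hNmm : 1 ≤ n * m * m' := Nat.one_le_iff_ne_zero.2 (by positivity)
      have hSM := hfin (n * m * m') hNmm
      have hSY := hfin (n * m) hNm
      set SM : Finset S := hSM.toFinset with hSMdef
      have hmemM : ∀ z : S, z ∈ SM ↔ ((n * m * m') • σ) z = z := by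
        intro z; rw [hSMdef, Set.Finite.mem_toFinset]; rfl
      set Y : Finset S := hSY.toFinset.filter (fun y => trA σ n m y = x) with hY
      have hmemY : ∀ y : S, y ∈ Y ↔ ((n * m) • σ) y = y ∧ trA σ n m y = x := by
        intro y
        rw [hY, Finset.mem_filter, Set.Finite.mem_toFinset]; rfl
      set Z : Finset S := SM.filter (fun z => trA σ n (m * m') z = x) with hZ
      have hmemZ : ∀ z : S, z ∈ Z ↔ ((n * m * m') • σ) z = z ∧ trA σ n (m * m') z = x := by
        intro z
        rw [hZ, Finset.mem_filter, hmemM]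
      have hfix : ∀ z : S, ((n * m * m') • σ) z = z → ((n * (m * m')) • σ) z = z := by
        intro z hz; rwa [← mul_assoc]
      -- LHS
      have hLHS : adams σ m (adams σ m' f) x n = ∑ z ∈ Z, f z (n * m * m') := by
        rw [adams, if_pos hx]
        rw [finsum_cond_eq_sum' _ Y (fun y => (hmemY y).symm)]
        have hstep : ∀ y ∈ Y, adams σ m' f y (n * m)
            = ∑ z ∈ Z.filter (fun z => trA σ (n * m) m' z = y), f z (n * m * m') := by
          intro y hy
          rw [hmemY] at hy
          rw [adams, if_pos hy.1]
          apply finsum_cond_eq_sum'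
          intro z
          rw [Finset.mem_filter, hmemZ]
          constructor
          · rintro ⟨hz1, hz2⟩
            refine ⟨⟨hz1, ?_⟩, hz2⟩
            rw [← trA_trA σ hm hm' (hfix z hz1), hz2, hy.2]
          · rintro ⟨⟨hz1, _⟩, hz3⟩
            exact ⟨hz1, hz3⟩
        rw [Finset.sum_congr rfl hstep]
        apply Finset.sum_fiberwise_of_maps_to
        intro z hz
        rw [hmemZ] at hz
        rw [hmemY]
        constructor
        · exact trA_fixed σ hm' hz.1
        · rw [trA_trA σ hm hm' (hfix z hz.1), hz.2]
      rw [hLHS, adams, if_pos hx]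
      rw [show n * (m * m') = n * m * m' from (mul_assoc n m m').symm]
      rw [finsum_cond_eq_sum' _ Z (fun z => (hmemZ z).symm)]
end

section
/- Let φ: S₁ → S₂ be an injective Ẑ-equivariant homomorphism of commutative torsion-free monoids whose image is a full submonoid (if x ∈ im(φ) and x = x' + x'' in S₂ then x', x'' ∈ im(φ)). Then the pullback φ*: CF(S₂) → CF(S₁), f ↦ f ∘ φ, is a homomorphism of λ-rings with respect to the convolution products and the Adams operations. -/
open scoped Classical

section Aux

variable {S S' : Type} [AddCommMonoid S] [AddCommMonoid S']

lemma pow_equiv_aux (σ₁ : AddAut S) (σ₂ : AddAut S') (φ : S →+ S')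
    (hequiv : ∀ x : S, φ (σ₁ x) = σ₂ (φ x)) :
    ∀ (n : ℕ) (y : S), φ ((n • σ₁) y) = (n • σ₂) (φ y) := by
  intro n
  induction n with
  | zero => intro y; simp
  | succ k ih =>
      intro y
      rw [succ_nsmul, succ_nsmul, AddAut.add_apply, AddAut.add_apply, ih, hequiv]

lemma full_sum_aux (φ : S →+ S')
    (hfull : ∀ x' x'' : S', x' + x'' ∈ Set.range φ →
        x' ∈ Set.range φ ∧ x'' ∈ Set.range φ) {ι : Type*} (t : Finset ι) (g : ι → S')
    (h : (∑ i ∈ t, g i) ∈ Set.range φ) : ∀ i ∈ t, g i ∈ Set.range φ := by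
  classical
  induction t using Finset.cons_induction with
  | empty => intro i hi; simp at hi
  | cons a u ha ih =>
      rw [Finset.sum_cons] at h
      intro i hi
      rcases Finset.mem_cons.mp hi with rfl | hi'
      · exact (hfull _ _ h).1
      · exact ih ((hfull _ _ h).2) i hi'

end Aux

/-- Let `φ : S₁ → S₂` be an injective `Ẑ`-equivariant homomorphism of
commutative torsion-free monoids whose image is a full submonoid.  Then the pullback
`φ* : f ↦ f ∘ φ` is a homomorphism of λ-rings with respect to the convolution products and
the Adams operations. -/
theorem stmt11 {S S' : Type} [AddCommMonoid S] [AddCommMonoid S']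
    (σ₁ : AddAut S) (σ₂ : AddAut S')
    (hfin₁ : SigmaFinite σ₁) (hfin₂ : SigmaFinite σ₂)
    (htf₁ : TorsionFreeMonoid S) (htf₂ : TorsionFreeMonoid S')
    (φ : S →+ S') (hequiv : ∀ x : S, φ (σ₁ x) = σ₂ (φ x))
    (hinj : Function.Injective φ)
    (hfull : ∀ x' x'' : S', x' + x'' ∈ Set.range φ →
        x' ∈ Set.range φ ∧ x'' ∈ Set.range φ) :
    (∀ f g : S' → ℕ → Kbar, IsCF σ₂ f → IsCF σ₂ g →
        (fun (y : S) (n : ℕ) => conv σ₂ f g (φ y) n)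
          = conv σ₁ (fun y n => f (φ y) n) (fun y n => g (φ y) n)) ∧
    (∀ (m : ℕ) (f : S' → ℕ → Kbar), 1 ≤ m → IsCF σ₂ f →
        (fun (y : S) (n : ℕ) => adams σ₂ m f (φ y) n)
          = adams σ₁ m (fun y n => f (φ y) n)) := by
  have hpow := pow_equiv_aux σ₁ σ₂ φ hequiv
  have hfix : ∀ (n : ℕ) (z : S), (n • σ₂) (φ z) = φ z ↔ (n • σ₁) z = z := by
    intro n z
    rw [← hpow]
    exact hinj.eq_iff
  have htr : ∀ (n m : ℕ) (z : S), φ (trA σ₁ n m z) = trA σ₂ n m (φ z) := by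
    intro n m z
    unfold trA
    rw [map_sum]
    exact Finset.sum_congr rfl fun i _ => hpow _ _
  constructor
  · intro f g _ _
    funext y n
    show conv σ₂ f g (φ y) n = conv σ₁ (fun y n => f (φ y) n) (fun y n => g (φ y) n) y n
    unfold conv
    refine (finsum_mem_eq_of_bijOn
      (s := {q : S × S | q.1 + q.2 = y ∧ (n • σ₁) q.1 = q.1 ∧ (n • σ₁) q.2 = q.2})
      (t := {p : S' × S' | p.1 + p.2 = φ y ∧ (n • σ₂) p.1 = p.1 ∧ (n • σ₂) p.2 = p.2})
      (fun q => (φ q.1, φ q.2)) ⟨?_, ?_, ?_⟩ ?_).symm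
    · rintro ⟨a, b⟩ ⟨h1, h2, h3⟩
      refine ⟨?_, ?_, ?_⟩
      · show φ a + φ b = φ y
        rw [← map_add, h1]
      · exact (hfix n a).mpr h2
      · exact (hfix n b).mpr h3
    · rintro ⟨a, b⟩ - ⟨c, d⟩ - h
      have h1 : φ a = φ c := congrArg Prod.fst h
      have h2 : φ b = φ d := congrArg Prod.snd h
      exact Prod.ext (hinj h1) (hinj h2)
    · rintro ⟨u, v⟩ ⟨h1, h2, h3⟩
      obtain ⟨⟨a, rfl⟩, ⟨b, rfl⟩⟩ := hfull u v ⟨y, h1.symm⟩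
      refine ⟨(a, b), ⟨?_, ?_, ?_⟩, rfl⟩
      · apply hinj
        rw [map_add]; exact h1
      · exact (hfix n a).mp h2
      · exact (hfix n b).mp h3
    · rintro ⟨a, b⟩ -
      rfl
  · intro m f hm _
    funext y n
    show adams σ₂ m f (φ y) n = adams σ₁ m (fun y n => f (φ y) n) y n
    unfold adams
    by_cases h : (n • σ₁) y = y
    · rw [if_pos ((hfix n y).mpr h), if_pos h]
      refine (finsum_mem_eq_of_bijOn
        (s := {z : S | ((n * m) • σ₁) z = z ∧ trA σ₁ n m z = y})
        (t := {w : S' | ((n * m) • σ₂) w = w ∧ trA σ₂ n m w = φ y})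
        φ ⟨?_, ?_, ?_⟩ ?_).symm
      · rintro z ⟨h1, h2⟩
        exact ⟨(hfix _ z).mpr h1, by rw [← htr, h2]⟩
      · exact fun a _ b _ hab => hinj hab
      · rintro w ⟨h1, h2⟩
        have hw : w ∈ Set.range φ := by
          have := full_sum_aux φ hfull (Finset.range m)
            (fun i => (((i + 1) * n) • σ₂) w) (by rw [← trA]; exact h2 ▸ ⟨y, rfl⟩)
            (m - 1) (Finset.mem_range.mpr (Nat.pred_lt (Nat.one_le_iff_ne_zero.mp hm)))
          have h3 : (((m - 1 + 1) * n) • σ₂) w ∈ Set.range ⇑φ := this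
          rwa [Nat.sub_add_cancel hm, Nat.mul_comm, h1] at h3
        obtain ⟨z, rfl⟩ := hw
        refine ⟨z, ⟨(hfix _ z).mp h1, hinj ?_⟩, rfl⟩
        rw [htr]; exact h2
      · intro z _
        rfl
    · rw [if_neg (fun hc => h ((hfix n y).mp hc)), if_neg h]
end
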